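/- arXiv:2004.05907 — 3 statements merged into one kernel-verified Lean document; each statement's English description precedes it below -/
import Mathlib

section
/- Let R be a commutative ring and M an m × m matrix over R. In the formal power series ring R[[t]], one has det(1 − t·M) · (∑_{n≥1} Tr(M^n) t^n) = −t · d/dt (det(1 − t·M)). Equivalently, the logarithmic derivative t·(d/dt) log(det(1 − t·M)^{-1}) has n-th coefficient Tr(M^n) for all n ≥ 1. -/
open PowerSeries Matrix

section Aux

variable {R : Type*} [CommRing R] {A : Type*} [CommRing A] [Algebra R A]

private lemma derivation_finset_prod' (D : Derivation R A A) {ι : Type*} [DecidableEq ι]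
    (s : Finset ι) (f : ι → A) :
    D (∏ i ∈ s, f i) = ∑ i ∈ s, (∏ j ∈ s.erase i, f j) * D (f i) := by
  induction s using Finset.induction_on with
  | empty => simp
  | insert a s hx ih =>
    rw [Finset.prod_insert hx, Derivation.leibniz, smul_eq_mul, smul_eq_mul, ih,
      Finset.sum_insert hx, Finset.erase_insert hx]
    rw [Finset.mul_sum, add_comm]
    congr 1
    refine Finset.sum_congr rfl fun i hi => ?_
    rw [Finset.erase_insert_of_ne (by rintro rfl; exact hx hi),
      Finset.prod_insert (by simp [hx, Finset.mem_erase])]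
    ring

/-- Jacobi's formula for a derivation: `D (det B) = ∑ i, det (B with column i replaced
by its entrywise derivative)`. -/
private lemma derivation_det' {n : ℕ} (D : Derivation R A A) (B : Matrix (Fin n) (Fin n) A) :
    D B.det = ∑ i, (B.updateCol i fun k => D (B k i)).det := by
  simp_rw [Matrix.det_apply]
  rw [map_sum]
  simp_rw [Units.smul_def, map_zsmul, derivation_finset_prod', Finset.smul_sum]
  rw [Finset.sum_comm]
  refine Finset.sum_congr rfl fun i _ => Finset.sum_congr rfl fun σ _ => ?_
  congr 1
  rw [← Finset.mul_prod_erase Finset.univ _ (Finset.mem_univ i)]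
  rw [Matrix.updateCol_self]
  rw [mul_comm]
  congr 1
  exact Finset.prod_congr rfl fun j hj =>
    (Matrix.updateCol_ne (Finset.ne_of_mem_erase hj)).symm

private lemma sum_det_updateCol_eq_trace' {n : ℕ} (B C : Matrix (Fin n) (Fin n) A) :
    ∑ i, (B.updateCol i fun k => C k i).det = (B.adjugate * C).trace := by
  have h : ∀ i, (B.updateCol i fun k => C k i).det
      = (B.adjugate *ᵥ fun k => C k i) i := by
    intro i
    rw [← Matrix.cramer_eq_adjugate_mulVec, Matrix.cramer_apply]
  simp_rw [h, Matrix.trace, Matrix.diag, Matrix.mulVec, Matrix.mul_apply, dotProduct]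

end Aux

section Geom

variable {R : Type*} [CommRing R]

/-- The geometric series `∑ₙ Xⁿ Mⁿ` as a matrix over `R⟦X⟧`. -/
private noncomputable def geomG (m : ℕ) (M : Matrix (Fin m) (Fin m) R) :
    Matrix (Fin m) (Fin m) R⟦X⟧ :=
  Matrix.of fun i j => mk fun n => (M ^ n) i j

private lemma map_mul_geomG (m : ℕ) (M : Matrix (Fin m) (Fin m) R) :
    M.map (C (R := R)) * geomG m M = Matrix.of fun i j => mk fun n => (M ^ (n + 1)) i j := by
  ext i j n
  rw [Matrix.mul_apply, map_sum]
  simp only [Matrix.map_apply, geomG, Matrix.of_apply, coeff_C_mul, coeff_mk]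
  rw [pow_succ', Matrix.mul_apply]

private lemma one_sub_mul_geomG (m : ℕ) (M : Matrix (Fin m) (Fin m) R) :
    (1 - (X : R⟦X⟧) • M.map (C (R := R))) * geomG m M = 1 := by
  rw [sub_mul, one_mul, smul_mul_assoc, map_mul_geomG]
  ext i j n
  rw [Matrix.sub_apply, Matrix.smul_apply, smul_eq_mul]
  cases n with
  | zero =>
    simp [geomG, Matrix.one_apply, coeff_zero_X_mul, apply_ite (constantCoeff (R := R))]
  | succ n =>
    rw [map_sub, coeff_succ_X_mul]
    simp [geomG, Matrix.one_apply, coeff_mk, apply_ite (coeff (R := R) (n + 1))]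

private lemma trace_geomG (m : ℕ) (M : Matrix (Fin m) (Fin m) R) :
    (mk fun n => if n = 0 then 0 else Matrix.trace (M ^ n) : R⟦X⟧) =
      X * Matrix.trace (M.map (C (R := R)) * geomG m M) := by
  rw [map_mul_geomG]
  ext n
  cases n with
  | zero => simp [Matrix.trace, coeff_zero_X_mul]
  | succ n =>
    rw [coeff_mk, coeff_succ_X_mul, Matrix.trace, if_neg n.succ_ne_zero]
    simp [Matrix.trace, Matrix.diag, map_sum, coeff_mk]

private lemma deriv_entry (m : ℕ) (M : Matrix (Fin m) (Fin m) R) (k i : Fin m) :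
    (derivative R) ((1 - (X : R⟦X⟧) • M.map (C (R := R))) k i) = -(M.map (C (R := R)) k i) := by
  rw [Matrix.sub_apply, Matrix.smul_apply, smul_eq_mul, map_sub]
  have h1 : (derivative R) ((1 : Matrix (Fin m) (Fin m) R⟦X⟧) k i) = 0 := by
    rw [Matrix.one_apply]
    split_ifs <;> simp
  have h2 : (derivative R) (M.map (⇑(C (R := R))) k i) = 0 := by
    rw [Matrix.map_apply, derivative_C]
  rw [h1, Derivation.leibniz, derivative_X, h2, smul_zero, smul_eq_mul, mul_one,
    zero_add, zero_sub]

end Geom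

/-- In `R⟦t⟧` one has `det(1 - t·M) · ∑_{n≥1} Tr(Mⁿ) tⁿ = - t · d/dt det(1 - t·M)`:
the logarithmic derivative of `det(1 - t·M)⁻¹` has `n`-th coefficient `Tr(Mⁿ)`. -/
theorem det_one_sub_smul_mul_trace_powerSeries {R : Type*} [CommRing R] (m : ℕ)
    (M : Matrix (Fin m) (Fin m) R) :
    Matrix.det (1 - (PowerSeries.X : R⟦X⟧) • M.map (PowerSeries.C (R := R))) *
        (PowerSeries.mk fun n => if n = 0 then 0 else Matrix.trace (M ^ n)) =
      - (PowerSeries.X *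
        PowerSeries.derivativeFun
          (Matrix.det (1 - (PowerSeries.X : R⟦X⟧) • M.map (PowerSeries.C (R := R))))) := by
  set A : Matrix (Fin m) (Fin m) R⟦X⟧ := 1 - (X : R⟦X⟧) • M.map (C (R := R)) with hA
  set Mc : Matrix (Fin m) (Fin m) R⟦X⟧ := M.map (C (R := R)) with hMc
  have hAG : A * geomG m M = 1 := one_sub_mul_geomG m M
  have hadj : A.adjugate = A.det • geomG m M := by
    calc A.adjugate = A.adjugate * (A * geomG m M) := by rw [hAG, mul_one]
      _ = (A.adjugate * A) * geomG m M := (mul_assoc _ _ _).symm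
      _ = (A.det • 1) * geomG m M := by rw [Matrix.adjugate_mul]
      _ = A.det • geomG m M := by rw [smul_mul_assoc, one_mul]
  have hderiv : derivativeFun A.det = - Matrix.trace (A.adjugate * Mc) := by
    have : derivativeFun A.det = (derivative R) A.det := rfl
    rw [this, derivation_det' (derivative R) A]
    have hcol : ∀ i : Fin m, (fun k => (derivative R) (A k i)) = fun k => (-Mc) k i := by
      intro i
      funext k
      rw [deriv_entry m M k i]
      simp [hMc]
    simp_rw [fun i => congrArg (fun c => (A.updateCol i c).det) (hcol i)]
    rw [sum_det_updateCol_eq_trace', Matrix.mul_neg, Matrix.trace_neg]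
  rw [hderiv, trace_geomG m M]
  rw [mul_neg, neg_neg]
  rw [← mul_assoc, mul_comm A.det X, mul_assoc]
  congr 1
  rw [Matrix.trace_mul_comm, hadj, smul_mul_assoc, Matrix.trace_smul, smul_eq_mul, hMc]
end

section
/- If a, b : ℕ → ℤ are integer linear recursive sequences, then their pointwise (Hadamard) product n ↦ a(n)·b(n) is again an integer linear recursive sequence. -/
/-- A sequence `a : ℕ → ℤ` is an integer linear recursive sequence if there are
`k ≥ 1` and integers `B₁, …, B_k` with `a n = B₁·a (n-1) + ⋯ + B_k·a (n-k)` for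
all `n ≥ k`. -/
def IsLinearRecursive (a : ℕ → ℤ) : Prop :=
  ∃ k : ℕ, 1 ≤ k ∧ ∃ B : Fin k → ℤ,
    ∀ n : ℕ, k ≤ n → a n = ∑ j : Fin k, B j * a (n - (j + 1))

open Polynomial Submodule Finset Pointwise

/-- The shift operator on integer sequences, as a `ℤ`-linear map. -/
noncomputable def shiftLM : (ℕ → ℤ) →ₗ[ℤ] (ℕ → ℤ) where
  toFun f := fun n => f (n + 1)
  map_add' := by intros; rfl
  map_smul' := by intros; rfl

lemma shiftLM_pow (f : ℕ → ℤ) (m n : ℕ) : (shiftLM ^ m) f n = f (n + m) := by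
  induction m generalizing n with
  | zero => rfl
  | succ m ih =>
    rw [pow_succ', Module.End.mul_apply]
    show ((shiftLM ^ m) f) (n + 1) = f (n + (m + 1))
    rw [ih]
    congr 1
    omega

lemma shiftLM_mul (f g : ℕ → ℤ) : shiftLM (f * g) = shiftLM f * shiftLM g := rfl

lemma shifts_mem_span {a : ℕ → ℤ} {k : ℕ} (hk : 1 ≤ k) {B : Fin k → ℤ}
    (hrec : ∀ n : ℕ, k ≤ n → a n = ∑ j : Fin k, B j * a (n - (j + 1))) (i : ℕ) :
    (shiftLM ^ i) a ∈ span ℤ (Set.range fun p : Fin k => (shiftLM ^ (p : ℕ)) a) := by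
  induction i using Nat.strong_induction_on with
  | _ i ih =>
    by_cases hik : i < k
    · exact subset_span ⟨⟨i, hik⟩, rfl⟩
    · push_neg at hik
      have key : (shiftLM ^ i) a
          = ∑ j : Fin k, B j • (shiftLM ^ (i - 1 - (j : ℕ))) a := by
        funext n
        simp only [Finset.sum_apply, Pi.smul_apply, smul_eq_mul, shiftLM_pow]
        rw [hrec (n + i) (le_trans hik (Nat.le_add_left _ _))]
        refine Finset.sum_congr rfl fun j _ => ?_
        have hj := j.isLt
        have harg : n + i - ((j : ℕ) + 1) = n + (i - 1 - (j : ℕ)) := by omega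
        rw [harg]
      rw [key]
      exact Submodule.sum_mem _ fun j _ =>
        Submodule.smul_mem _ _ (ih (i - 1 - (j : ℕ)) (by have := j.isLt; omega))

/-- The pointwise (Hadamard) product of two integer linear recursive sequences is linear recursive. -/
theorem isLinearRecursive_mul (a b : ℕ → ℤ)
    (ha : IsLinearRecursive a) (hb : IsLinearRecursive b) :
    IsLinearRecursive (fun n => a n * b n) := by
  classical
  obtain ⟨k, hk, B, hB⟩ := ha
  obtain ⟨l, hl, C, hC⟩ := hb
  set c : ℕ → ℤ := fun n => a n * b n with hc_def
  set s : Set (ℕ → ℤ) := Set.range fun p : Fin k => (shiftLM ^ (p : ℕ)) a with hs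
  set t : Set (ℕ → ℤ) := Set.range fun q : Fin l => (shiftLM ^ (q : ℕ)) b with ht
  set N : Submodule ℤ (ℕ → ℤ) := span ℤ (s * t) with hN
  -- all products of shifts of a and b lie in N
  have hmul : ∀ i j : ℕ, (shiftLM ^ i) a * (shiftLM ^ j) b ∈ N := by
    intro i j
    have h := Submodule.mul_mem_mul (shifts_mem_span hk hB i) (shifts_mem_span hl hC j)
    rwa [Submodule.span_mul_span] at h
  -- N is invariant under the shift
  have hσN : ∀ x ∈ N, shiftLM x ∈ N := by
    intro x hx
    refine Submodule.span_induction ?_ ?_ ?_ ?_ hx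
    · rintro y ⟨u, hu, v, hv, rfl⟩
      obtain ⟨p, rfl⟩ := hu
      obtain ⟨q, rfl⟩ := hv
      rw [shiftLM_mul, ← Module.End.mul_apply, ← pow_succ', ← Module.End.mul_apply, ← pow_succ']
      exact hmul _ _
    · simpa using N.zero_mem
    · intro y z _ _ hy hz
      rw [map_add]; exact N.add_mem hy hz
    · intro r y _ hy
      rw [map_smul]; exact N.smul_mem r hy
  -- N is a finite module
  have hfin : Module.Finite ℤ N := by
    rw [Module.Finite.iff_fg]
    exact Submodule.fg_span ((Set.finite_range _).mul (Set.finite_range _))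
  -- restrict the shift to N and use integrality (Cayley–Hamilton)
  let τ : N →ₗ[ℤ] N := shiftLM.restrict hσN
  have hpow : ∀ (m : ℕ) (x : N), ((τ ^ m) x : ℕ → ℤ) = (shiftLM ^ m) (x : ℕ → ℤ) := by
    intro m
    induction m with
    | zero => intro x; rfl
    | succ m ih =>
      intro x
      rw [pow_succ, Module.End.mul_apply, ih, pow_succ, Module.End.mul_apply]
      rfl
  obtain ⟨p, hp_monic, hp0⟩ := LinearMap.exists_monic_and_aeval_eq_zero ℤ τ
  set q : ℤ[X] := p * X with hq
  have hq_monic : q.Monic := hp_monic.mul monic_X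
  have hq0 : aeval τ q = 0 := by rw [hq, map_mul, hp0, zero_mul]
  set D : ℕ := q.natDegree with hD
  have hD1 : 1 ≤ D := by
    have : q.natDegree = p.natDegree + 1 := by
      rw [hq, natDegree_mul hp_monic.ne_zero X_ne_zero, natDegree_X]
    omega
  have hcN : c ∈ N := by
    have := hmul 0 0
    simp at this; exact this
  -- the fundamental identity
  have expand : ∀ m : ℕ, (0 : ℤ) = ∑ i ∈ Finset.range (D + 1), q.coeff i * c (m + i) := by
    intro m
    have h1 : (aeval τ q) ⟨c, hcN⟩ = 0 := by rw [hq0]; rfl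
    have h2 := congrArg (fun y : N => (y : ℕ → ℤ) m) h1
    simp only [aeval_eq_sum_range, ← hD] at h2
    simp only [LinearMap.coe_sum, Finset.sum_apply, LinearMap.smul_apply,
      AddSubmonoidClass.coe_finset_sum, SetLike.val_smul, Pi.smul_apply,
      smul_eq_mul, ZeroMemClass.coe_zero, Pi.zero_apply] at h2
    rw [← h2]
    refine Finset.sum_congr rfl fun i _ => ?_
    congr 1
    rw [hpow i ⟨c, hcN⟩, shiftLM_pow]
  have hmain : ∀ m : ℕ, c (m + D) = ∑ i ∈ Finset.range D, -(q.coeff i) * c (m + i) := by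
    intro m
    have h := expand m
    rw [Finset.sum_range_succ, hq_monic.coeff_natDegree, one_mul] at h
    have h2 : c (m + D) = -∑ i ∈ Finset.range D, q.coeff i * c (m + i) := by linarith
    rw [h2, ← Finset.sum_neg_distrib]
    exact Finset.sum_congr rfl fun i _ => by ring
  refine ⟨D, hD1, fun j : Fin D => -(q.coeff (D - 1 - (j : ℕ))), ?_⟩
  intro n hn
  show c n = ∑ j : Fin D, -(q.coeff (D - 1 - (j : ℕ))) * c (n - ((j : ℕ) + 1))
  rw [Fin.sum_univ_eq_sum_range (fun j => -(q.coeff (D - 1 - j)) * c (n - (j + 1)))]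
  have hre : ∀ j ∈ Finset.range D,
      -(q.coeff (D - 1 - j)) * c (n - (j + 1))
        = -(q.coeff (D - 1 - j)) * c ((n - D) + (D - 1 - j)) := by
    intro j hj
    rw [Finset.mem_range] at hj
    congr 2
    omega
  rw [Finset.sum_congr rfl hre,
    Finset.sum_range_reflect (fun i => -(q.coeff i) * c ((n - D) + i)) D,
    ← hmain (n - D)]
  congr 1
  omega
end

section
/- Let F ∈ ℚ[[t]] be the unique power series with constant coefficient 1 satisfying the differential equation (1 − t)² · F′ = F (namely F = exp(t/(1−t)) = exp(∑_{n≥1} t^n)). Then F is not rational: there exist no polynomials p, q ∈ ℚ[t] with q ≠ 0 such that q · F = p in ℚ[[t]]. -/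
open PowerSeries

/-- The power series `F = exp(t/(1-t))`, characterized as the unique solution with
constant coefficient `1` of `(1-t)²·F′ = F`, is not rational: there are no
polynomials `p, q` with `q ≠ 0` and `q·F = p` in `ℚ⟦t⟧`. -/
theorem exp_geom_not_rational (F : PowerSeries ℚ)
    (hF0 : PowerSeries.constantCoeff F = 1)
    (hF : (1 - PowerSeries.X) ^ 2 * F.derivativeFun = F) :
    ¬ ∃ p q : Polynomial ℚ, q ≠ 0 ∧ (q : PowerSeries ℚ) * F = (p : PowerSeries ℚ) := by
  rintro ⟨p, q, hq, hqF⟩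
  have hFne : F ≠ 0 := by
    intro h; rw [h] at hF0; simp at hF0
  have hqc : (q : PowerSeries ℚ) ≠ 0 := by
    intro h
    rw [← Polynomial.coe_zero] at h
    exact hq (Polynomial.coe_inj.1 h)
  have hp : p ≠ 0 := by
    intro h
    rw [h] at hqF
    have : (q : PowerSeries ℚ) * F = 0 := by simpa using hqF
    rcases mul_eq_zero.1 this with h1 | h1
    · exact hqc h1
    · exact hFne h1
  -- differentiate q*F = p
  have hd : (q : PowerSeries ℚ) * F.derivativeFun + F * (q.derivative : Polynomial ℚ) =
      (p.derivative : Polynomial ℚ) := by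
    have := congrArg PowerSeries.derivativeFun hqF
    have hc : ∀ f : Polynomial ℚ, (f : PowerSeries ℚ).derivativeFun =
        ((Polynomial.derivative f : Polynomial ℚ) : PowerSeries ℚ) :=
      fun f => PowerSeries.derivative_coe f
    rw [PowerSeries.derivativeFun_mul, hc,
      hc] at this
    simpa [smul_eq_mul, mul_comm] using this
  -- multiply by (1-X)^2 * q and use the ODE
  have key : ((p * q + p * q.derivative * (1 - Polynomial.X) ^ 2 : Polynomial ℚ) : PowerSeries ℚ)
      = (((1 - Polynomial.X) ^ 2 * q * p.derivative : Polynomial ℚ) : PowerSeries ℚ) := by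
    push_cast
    rw [← hqF, ← hd]
    linear_combination -((q : PowerSeries ℚ))^2 * hF
  have hpoly : p * q + p * q.derivative * (1 - Polynomial.X) ^ 2
      = (1 - Polynomial.X) ^ 2 * q * p.derivative := Polynomial.coe_inj.1 key
  -- rewrite as p*q = (X - 1)^2 * (q*p' - p*q')
  have hW : p * q = (Polynomial.X - Polynomial.C 1) ^ 2 *
      (q * p.derivative - p * q.derivative) := by
    have : (Polynomial.X - Polynomial.C 1 : Polynomial ℚ) ^ 2
        = (1 - Polynomial.X) ^ 2 := by ring_nf; rw [Polynomial.C_1]; ring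
    rw [this]; linear_combination hpoly
  set a := p.rootMultiplicity 1 with ha
  set b := q.rootMultiplicity 1 with hb
  have hpq : p * q ≠ 0 := mul_ne_zero hp hq
  -- divisibility of the Wronskian
  have hdp : (Polynomial.X - Polynomial.C 1 : Polynomial ℚ) ^ (a + b - 1) ∣ q * p.derivative := by
    have h1 : (Polynomial.X - Polynomial.C 1 : Polynomial ℚ) ^ b ∣ q :=
      q.pow_rootMultiplicity_dvd 1
    have h2 : (Polynomial.X - Polynomial.C 1 : Polynomial ℚ) ^ (a - 1) ∣ p.derivative :=
      Polynomial.pow_sub_one_dvd_derivative_of_pow_dvd (p.pow_rootMultiplicity_dvd 1)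
    refine dvd_trans (pow_dvd_pow _ (show a + b - 1 ≤ b + (a - 1) by omega)) ?_
    rw [pow_add]
    exact mul_dvd_mul h1 h2
  have hdq : (Polynomial.X - Polynomial.C 1 : Polynomial ℚ) ^ (a + b - 1) ∣ p * q.derivative := by
    have h1 : (Polynomial.X - Polynomial.C 1 : Polynomial ℚ) ^ a ∣ p :=
      p.pow_rootMultiplicity_dvd 1
    have h2 : (Polynomial.X - Polynomial.C 1 : Polynomial ℚ) ^ (b - 1) ∣ q.derivative :=
      Polynomial.pow_sub_one_dvd_derivative_of_pow_dvd (q.pow_rootMultiplicity_dvd 1)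
    refine dvd_trans (pow_dvd_pow _ (show a + b - 1 ≤ a + (b - 1) by omega)) ?_
    rw [pow_add]
    exact mul_dvd_mul h1 h2
  have hdW : (Polynomial.X - Polynomial.C 1 : Polynomial ℚ) ^ (2 + (a + b - 1)) ∣ p * q := by
    rw [hW, pow_add]
    exact mul_dvd_mul_left _ (dvd_sub hdp hdq)
  have hle : 2 + (a + b - 1) ≤ (p * q).rootMultiplicity 1 :=
    (Polynomial.le_rootMultiplicity_iff hpq).2 hdW
  rw [Polynomial.rootMultiplicity_mul hpq, ← ha, ← hb] at hle
  omega
end
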